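/- Let φ : ℝ → [-∞,∞) be a concave function whose domain (where φ > -∞) is contained in [0,1], and suppose ∫₀¹ (e^{φ(u)/2} - 1)² du ≤ δ² for some δ ∈ (0, 2^{-5/2}]. Then φ(x) ≤ 2^{13/2} δ for every x ∈ [0,1]. -/

import Mathlib

open MeasureTheory

/-- Superlevel sets of a multiplicatively log-concave nonnegative function are convex. -/
lemma lc_superlevel (f : ℝ → ℝ) (hf0 : ∀ x, 0 ≤ f x)
    (hlc : ∀ x y : ℝ, ∀ t : ℝ, 0 ≤ t → t ≤ 1 →
      f x ^ t * f y ^ (1 - t) ≤ f (t * x + (1 - t) * y)) (c : ℝ) :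
    Convex ℝ {x | c < f x} := by
  intro x hx y hy p q hp hq hpq
  simp only [Set.mem_setOf_eq] at hx hy ⊢
  have hq' : q = 1 - p := by linarith
  subst hq'
  simp only [smul_eq_mul]
  rcases lt_or_ge c 0 with hc | hc
  · exact lt_of_lt_of_le hc (hf0 _)
  have key := hlc x y p hp (by linarith)
  refine lt_of_lt_of_le ?_ key
  rcases eq_or_lt_of_le hp with hp0 | hp0
  · simp [← hp0, hy]
  rcases eq_or_lt_of_le (show p ≤ 1 by linarith) with hp1 | hp1
  · simp [hp1, hx]
  have h1 : c ^ p < f x ^ p := Real.rpow_lt_rpow hc hx hp0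
  have h2 : c ^ (1 - p) ≤ f y ^ (1 - p) := Real.rpow_le_rpow hc hy.le (by linarith)
  have hfx : 0 < f x := lt_of_le_of_lt hc hx
  have hfy : 0 < f y := lt_of_le_of_lt hc hy
  rcases eq_or_lt_of_le hc with hc0 | hc0
  · have : 0 < f x ^ p * f y ^ (1 - p) :=
      mul_pos (Real.rpow_pos_of_pos hfx p) (Real.rpow_pos_of_pos hfy _)
    simpa [← hc0] using this
  have hcp : (0:ℝ) < c ^ p := Real.rpow_pos_of_pos hc0 p
  have hcq : (0:ℝ) < c ^ (1 - p) := Real.rpow_pos_of_pos hc0 _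
  calc c = c ^ p * c ^ (1 - p) := by
        rw [← Real.rpow_add hc0]; simp
    _ < f x ^ p * c ^ (1 - p) := by
        exact mul_lt_mul_of_pos_right h1 hcq
    _ ≤ f x ^ p * f y ^ (1 - p) := by
        apply mul_le_mul_of_nonneg_left h2
        exact Real.rpow_nonneg (hf0 x) p

lemma lc_measurable (f : ℝ → ℝ) (hf0 : ∀ x, 0 ≤ f x)
    (hlc : ∀ x y : ℝ, ∀ t : ℝ, 0 ≤ t → t ≤ 1 →
      f x ^ t * f y ^ (1 - t) ≤ f (t * x + (1 - t) * y)) :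
    Measurable f := by
  apply measurable_of_Ioi
  intro c
  have : f ⁻¹' Set.Ioi c = {x | c < f x} := rfl
  rw [this]
  exact ((lc_superlevel f hf0 hlc c).ordConnected).measurableSet

/-- Extraction lemma: from `u ^ t * v ^ (1 - t) ≤ M` deduce a bound on `u`. -/
lemma rpow_extract {u v M t τ : ℝ} (hu : 0 ≤ u) (hv : 0 < v)
    (ht0 : 0 < t) (ht1 : t ≤ 1) (hτ0 : 0 < τ) (hτt : τ ≤ t)
    (hM1 : 1 ≤ M) (h : u ^ t * v ^ (1 - t) ≤ M) :
    u ≤ (M * max v⁻¹ 1) ^ (τ⁻¹ : ℝ) := by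
  have hv1 : (0:ℝ) < v ^ (1 - t) := Real.rpow_pos_of_pos hv _
  have hmin : min v 1 ≤ v ^ (1 - t) := by
    rcases le_or_gt 1 v with hge | hlt
    · have : (1:ℝ) = v ^ (0:ℝ) := by simp
      calc min v 1 ≤ 1 := min_le_right _ _
        _ = v ^ (0:ℝ) := by simp
        _ ≤ v ^ (1 - t) := Real.rpow_le_rpow_of_exponent_le hge (by linarith)
    · calc min v 1 ≤ v := min_le_left _ _
        _ = v ^ (1:ℝ) := by simp
        _ ≤ v ^ (1 - t) := Real.rpow_le_rpow_of_exponent_ge hv hlt.le (by linarith)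
  have hminpos : (0:ℝ) < min v 1 := lt_min hv one_pos
  have hinv : (v ^ (1 - t))⁻¹ ≤ max v⁻¹ 1 := by
    have h1 : (v ^ (1 - t))⁻¹ ≤ (min v 1)⁻¹ := by
      exact inv_anti₀ hminpos hmin
    have h2 : (min v 1)⁻¹ = max v⁻¹ 1 := by
      rcases le_total v 1 with hle | hge
      · rw [min_eq_left hle, max_eq_left]
        exact ((one_le_inv₀ hv).mpr hle)
      · rw [min_eq_right hge, max_eq_right]
        · simp
        · exact inv_le_one_of_one_le₀ hge
    rw [← h2]; exact h1
  have hut : u ^ t ≤ M * max v⁻¹ 1 := by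
    have h1 : u ^ t ≤ M * (v ^ (1 - t))⁻¹ := by
      rw [← le_div_iff₀ hv1] at h
      rw [div_eq_mul_inv] at h
      exact h
    calc u ^ t ≤ M * (v ^ (1 - t))⁻¹ := h1
      _ ≤ M * max v⁻¹ 1 := by
        apply mul_le_mul_of_nonneg_left hinv (by linarith)
  have hD1 : (1:ℝ) ≤ M * max v⁻¹ 1 := by
    have : (1:ℝ) ≤ max v⁻¹ 1 := le_max_right _ _
    nlinarith
  have hstep : u ≤ (M * max v⁻¹ 1) ^ (t⁻¹ : ℝ) := by
    have := Real.rpow_le_rpow (by positivity) hut (le_of_lt (by positivity : (0:ℝ) < t⁻¹))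
    rwa [← Real.rpow_mul hu, mul_inv_cancel₀ (ne_of_gt ht0), Real.rpow_one] at this
  calc u ≤ (M * max v⁻¹ 1) ^ (t⁻¹ : ℝ) := hstep
    _ ≤ (M * max v⁻¹ 1) ^ (τ⁻¹ : ℝ) := by
      apply Real.rpow_le_rpow_of_exponent_le hD1
      exact inv_anti₀ hτ0 hτt

/-- A log-concave nonnegative function positive at two points of `[0,1]` and vanishing
outside `[0,1]` is bounded on `[0,1]`. -/
lemma lc_bounded (f : ℝ → ℝ) (hf0 : ∀ x, 0 ≤ f x)
    (hlc : ∀ x y : ℝ, ∀ t : ℝ, 0 ≤ t → t ≤ 1 →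
      f x ^ t * f y ^ (1 - t) ≤ f (t * x + (1 - t) * y))
    {a b : ℝ} (hab : a < b) (ha : 0 < f a) (hb : 0 < f b)
    (hia : a ∈ Set.Icc (0:ℝ) 1) (hib : b ∈ Set.Icc (0:ℝ) 1) :
    ∃ B : ℝ, ∀ x ∈ Set.Icc (0:ℝ) 1, f x ≤ B := by
  set m := (a + b) / 2 with hm
  set τ := (b - a) / 2 with hτ
  have hτ0 : 0 < τ := by rw [hτ]; linarith
  have hτ1 : τ ≤ 1 := by
    rw [hτ]; have := hia.1; have := hib.2; linarith
  set M : ℝ := max (f m) 1 with hM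
  have hM1 : (1:ℝ) ≤ M := le_max_right _ _
  set D : ℝ := max (M * max (f a)⁻¹ 1) (M * max (f b)⁻¹ 1) with hD
  have hD1 : (1:ℝ) ≤ D := by
    have : (1:ℝ) ≤ M * max (f a)⁻¹ 1 := by
      have h1 : (1:ℝ) ≤ max (f a)⁻¹ 1 := le_max_right _ _
      nlinarith
    exact this.trans (le_max_left _ _)
  refine ⟨D ^ (τ⁻¹ : ℝ), ?_⟩
  intro x hx
  have hBD : (1:ℝ) ≤ D ^ (τ⁻¹ : ℝ) := Real.one_le_rpow hD1 (by positivity)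
  rcases le_or_gt (f x) 1 with hfx | hfx
  · linarith
  rcases lt_trichotomy x m with hxm | hxm | hxm
  · -- x < m, use b
    have hxb : x < b := by rw [hm] at hxm; linarith
    have hbx0 : 0 < b - x := by linarith
    set t := (b - m) / (b - x) with ht
    have hbm : b - m = τ := by rw [hm, hτ]; ring
    have ht0 : 0 < t := by
      rw [ht]; apply div_pos _ hbx0; rw [hbm]; exact hτ0
    have ht1 : t ≤ 1 := by
      rw [ht, div_le_one hbx0]; linarith
    have hτt : τ ≤ t := by
      rw [ht, hbm, le_div_iff₀ hbx0]
      have h1 : b - x ≤ 1 := by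
        have := hx.1; have := hib.2; linarith
      nlinarith
    have harg : t * x + (1 - t) * b = m := by
      rw [ht]; field_simp; ring
    have key := hlc x b t ht0.le ht1
    rw [harg] at key
    have key2 : f x ^ t * f b ^ (1 - t) ≤ M := key.trans (le_max_left _ _)
    have := rpow_extract (hf0 x) hb ht0 ht1 hτ0 hτt hM1 key2
    calc f x ≤ (M * max (f b)⁻¹ 1) ^ (τ⁻¹ : ℝ) := this
      _ ≤ D ^ (τ⁻¹ : ℝ) := by
        apply Real.rpow_le_rpow (by positivity) (le_max_right _ _) (by positivity)
  · -- x = m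
    have hτinv : (1:ℝ) ≤ τ⁻¹ := (one_le_inv₀ hτ0).mpr hτ1
    calc f x = f m := by rw [hxm]
      _ ≤ M := le_max_left _ _
      _ = M ^ (1:ℝ) := by simp
      _ ≤ M ^ (τ⁻¹ : ℝ) := Real.rpow_le_rpow_of_exponent_le hM1 hτinv
      _ ≤ D ^ (τ⁻¹ : ℝ) := by
        apply Real.rpow_le_rpow (by positivity) ?_ (by positivity)
        calc M = M * 1 := by ring
          _ ≤ M * max (f a)⁻¹ 1 := by
            apply mul_le_mul_of_nonneg_left (le_max_right _ _) (by linarith)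
          _ ≤ D := le_max_left _ _
  · -- m < x, use a
    have hax : a < x := by rw [hm] at hxm; linarith
    have hxa0 : 0 < x - a := by linarith
    set t := (m - a) / (x - a) with ht
    have hma : m - a = τ := by rw [hm, hτ]; ring
    have ht0 : 0 < t := by
      rw [ht, hma]; positivity
    have ht1 : t ≤ 1 := by
      rw [ht, div_le_one hxa0, hm]; linarith
    have hτt : τ ≤ t := by
      rw [ht, hma, le_div_iff₀ hxa0]
      have h1 : x - a ≤ 1 := by
        have := hx.2; have := hia.1; linarith
      nlinarith
    have harg : t * x + (1 - t) * a = m := by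
      rw [ht]; field_simp; ring
    have key := hlc x a t ht0.le ht1
    rw [harg] at key
    have key2 : f x ^ t * f a ^ (1 - t) ≤ M := key.trans (le_max_left _ _)
    have := rpow_extract (hf0 x) ha ht0 ht1 hτ0 hτt hM1 key2
    calc f x ≤ (M * max (f a)⁻¹ 1) ^ (τ⁻¹ : ℝ) := this
      _ ≤ D ^ (τ⁻¹ : ℝ) := by
        apply Real.rpow_le_rpow (by positivity) (le_max_left _ _) (by positivity)

/-- Lower bound on `f` along the half-segment from the midpoint of `y,x₀` to `x₀`. -/
lemma seg_bound (f : ℝ → ℝ) (hf0 : ∀ x, 0 ≤ f x)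
    (hlc : ∀ x y : ℝ, ∀ t : ℝ, 0 ≤ t → t ≤ 1 →
      f x ^ t * f y ^ (1 - t) ≤ f (t * x + (1 - t) * y))
    {x₀ y K c : ℝ} (hxy : y < x₀) (hK : 1 ≤ K) (hfx : K ^ 2 ≤ f x₀)
    (hc0 : 0 < c) (hc1 : c ≤ 1) (hfy : c ≤ f y) :
    ∀ z ∈ Set.Icc ((x₀ + y) / 2) x₀, K * c ≤ f z := by
  intro z hz
  obtain ⟨hz1, hz2⟩ := hz
  have hxy0 : 0 < x₀ - y := by linarith
  set t : ℝ := (z - y) / (x₀ - y) with ht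
  have ht2 : 1/2 ≤ t := by rw [ht, le_div_iff₀ hxy0]; linarith
  have ht1 : t ≤ 1 := by rw [ht, div_le_one hxy0]; linarith
  have ht0 : 0 ≤ t := by linarith
  have harg : t * x₀ + (1 - t) * y = z := by
    rw [ht]; field_simp; ring
  have key := hlc x₀ y t ht0 ht1
  rw [harg] at key
  refine le_trans ?_ key
  have hK0 : (0:ℝ) ≤ K := by linarith
  have h1 : K ≤ f x₀ ^ t := by
    have e1 : ((K ^ 2 : ℝ)) ^ (t:ℝ) = K ^ (2 * t) := by
      rw [show ((K:ℝ) ^ 2) = K ^ ((2:ℕ):ℝ) from (Real.rpow_natCast K 2).symm,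
        ← Real.rpow_mul hK0]
      norm_num
    have h2 : (K:ℝ) ^ (1:ℝ) ≤ K ^ (2 * t) := Real.rpow_le_rpow_of_exponent_le hK (by linarith)
    rw [Real.rpow_one] at h2
    calc K ≤ K ^ (2 * t) := h2
      _ = ((K ^ 2 : ℝ)) ^ (t:ℝ) := e1.symm
      _ ≤ f x₀ ^ t := Real.rpow_le_rpow (by positivity) hfx ht0
  have h2 : c ≤ f y ^ (1 - t) := by
    have h3 : c ^ (1:ℝ) ≤ c ^ (1 - t) := Real.rpow_le_rpow_of_exponent_ge hc0 hc1 (by linarith)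
    rw [Real.rpow_one] at h3
    exact h3.trans (Real.rpow_le_rpow hc0.le hfy (by linarith))
  have hfx0 : (0:ℝ) ≤ f x₀ ^ t := Real.rpow_nonneg (hf0 _) _
  exact mul_le_mul h1 h2 hc0.le hfx0

set_option maxHeartbeats 1600000 in
theorem logconcave_near_uniform_upper (f : ℝ → ℝ) (δ : ℝ)
    (hδ0 : 0 < δ) (hδ : δ ≤ 2 ^ (-(5:ℝ)/2))
    (hf0 : ∀ x, 0 ≤ f x)
    (hlc : ∀ x y : ℝ, ∀ t : ℝ, 0 ≤ t → t ≤ 1 →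
      f x ^ t * f y ^ (1 - t) ≤ f (t * x + (1 - t) * y))
    (hdom : ∀ x, x ∉ Set.Icc (0:ℝ) 1 → f x = 0)
    (hH : ∫ u in Set.Icc (0:ℝ) 1, (Real.sqrt (f u) - 1) ^ 2 ≤ δ ^ 2) :
    ∀ x ∈ Set.Icc (0:ℝ) 1, f x ≤ Real.exp (2 ^ ((13:ℝ)/2) * δ) := by
  intro x₀ hx₀
  by_contra hM
  push_neg at hM
  set s : ℝ := Real.sqrt 2 with hs
  have hs2 : s ^ 2 = 2 := Real.sq_sqrt (by norm_num)
  have hs_pos : (0:ℝ) < s := Real.sqrt_pos.mpr (by norm_num)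
  have hs_lt : s ≤ 3/2 := by
    nlinarith
  have hs1 : 1 ≤ s := by nlinarith
  -- rewrite the two rpow constants
  have h64 : (2:ℝ) ^ (6:ℝ) = 64 := by
    rw [show (6:ℝ) = ((6:ℕ):ℝ) by norm_num, Real.rpow_natCast]; norm_num
  have hc13 : (2:ℝ) ^ ((13:ℝ)/2) = 64 * s := by
    rw [hs, Real.sqrt_eq_rpow, ← h64, ← Real.rpow_add (by norm_num : (0:ℝ) < 2)]
    congr 1; norm_num
  have h8 : (2:ℝ) ^ (-(3:ℝ)) = 1/8 := by
    rw [Real.rpow_neg (by norm_num), show (3:ℝ) = ((3:ℕ):ℝ) by norm_num, Real.rpow_natCast]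
    norm_num
  have hc52 : (2:ℝ) ^ (-(5:ℝ)/2) = s/8 := by
    rw [hs, Real.sqrt_eq_rpow, show (-(5:ℝ)/2) = 1/2 + (-(3:ℝ)) by norm_num,
      Real.rpow_add (by norm_num : (0:ℝ) < 2), h8]
    ring
  rw [hc52] at hδ
  rw [hc13] at hM
  have hmf : Measurable f := lc_measurable f hf0 hlc
  set g : ℝ → ℝ := fun u => (Real.sqrt (f u) - 1) ^ 2 with hg
  have hHg : ∫ u in Set.Icc (0:ℝ) 1, g u ≤ δ ^ 2 := by
    simp only [hg]; exact hH
  have hgm : Measurable g := (hmf.sqrt.sub measurable_const).pow_const 2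
  have hg0 : ∀ u, 0 ≤ g u := fun u => sq_nonneg _
  have hfx₀pos : 0 < f x₀ := lt_trans (Real.exp_pos _) hM
  have hδ2 : δ ^ 2 ≤ 1/32 := by nlinarith
  by_cases hsing : ∃ b ∈ Set.Icc (0:ℝ) 1, b ≠ x₀ ∧ 0 < f b
  swap
  · -- degenerate: f vanishes away from x₀
    push_neg at hsing
    have hzero : ∀ u, u ≠ x₀ → f u = 0 := by
      intro u hu
      by_cases hmem : u ∈ Set.Icc (0:ℝ) 1
      · have := hsing u hmem hu
        exact le_antisymm (by linarith) (hf0 u)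
      · exact hdom u hmem
    have hae : g =ᵐ[volume.restrict (Set.Icc (0:ℝ) 1)] fun _ => (1:ℝ) := by
      have h0 : (volume : Measure ℝ) {x₀} = 0 := measure_singleton _
      have h1 : ∀ᵐ u ∂(volume : Measure ℝ), u ≠ x₀ := by
        rw [ae_iff]
        convert h0 using 2
        ext u; simp
      have h2 := ae_restrict_of_ae (μ := (volume : Measure ℝ))
        (s := Set.Icc (0:ℝ) 1) h1
      filter_upwards [h2] with u hu
      simp [hg, hzero u hu]
    have hone : ∫ u in Set.Icc (0:ℝ) 1, g u = 1 := by
      rw [integral_congr_ae hae]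
      simp [Real.volume_Icc]
    rw [hone] at hHg
    linarith
  obtain ⟨b, hbI, hbne, hbpos⟩ := hsing
  have hbdd : ∃ B : ℝ, ∀ x ∈ Set.Icc (0:ℝ) 1, f x ≤ B := by
    rcases lt_or_gt_of_ne hbne with h | h
    · exact lc_bounded f hf0 hlc h hbpos hfx₀pos hbI hx₀
    · exact lc_bounded f hf0 hlc h hfx₀pos hbpos hx₀ hbI
  obtain ⟨B, hB⟩ := hbdd
  have hIcc_fin : volume (Set.Icc (0:ℝ) 1) < ⊤ := by
    rw [Real.volume_Icc]; exact ENNReal.ofReal_lt_top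
  have hgint : IntegrableOn g (Set.Icc (0:ℝ) 1) := by
    refine Integrable.mono' (g := fun _ => (Real.sqrt B + 1)^2)
      (integrableOn_const hIcc_fin.ne) hgm.aestronglyMeasurable ?_
    refine ae_restrict_of_forall_mem measurableSet_Icc ?_
    intro u hu
    have h1 : Real.sqrt (f u) ≤ Real.sqrt B := Real.sqrt_le_sqrt (hB u hu)
    have h2 : 0 ≤ Real.sqrt (f u) := Real.sqrt_nonneg _
    have h3 : 0 ≤ Real.sqrt B := Real.sqrt_nonneg _
    rw [Real.norm_eq_abs, abs_of_nonneg (hg0 u)]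
    have h4 : (Real.sqrt (f u) - 1)^2 ≤ (Real.sqrt B + 1)^2 := by nlinarith
    exact h4
  set ε₁ : ℝ := 2 * s * δ with hε₁
  have hε₁pos : 0 < ε₁ := by positivity
  have hε₁half : ε₁ ≤ 1/2 := by nlinarith
  set T : Set ℝ := {u ∈ Set.Icc (0:ℝ) 1 | f u < (1 - ε₁)^2} with hT
  have hTmeas : MeasurableSet T := by
    have hTeq : T = Set.Icc (0:ℝ) 1 ∩ f ⁻¹' (Set.Iio ((1 - ε₁)^2)) := by
      ext u
      simp [hT, Set.mem_sep_iff, Set.mem_preimage, Set.mem_Iio, and_comm]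
    rw [hTeq]
    exact measurableSet_Icc.inter (hmf measurableSet_Iio)
  have hTsub : T ⊆ Set.Icc (0:ℝ) 1 := fun u hu => hu.1
  have hTfin : volume T ≠ ⊤ :=
    ne_top_of_le_ne_top (by rw [Real.volume_Icc]; exact ENNReal.ofReal_ne_top)
      (measure_mono hTsub)
  have hgT : ∀ u ∈ T, ε₁^2 ≤ g u := by
    intro u hu
    obtain ⟨huI, huf⟩ := hu
    have h1 : Real.sqrt (f u) < 1 - ε₁ := by
      have := Real.sqrt_lt_sqrt (hf0 u) huf
      rwa [Real.sqrt_sq (by linarith)] at this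
    have h2 : 0 ≤ Real.sqrt (f u) := Real.sqrt_nonneg _
    have : ε₁^2 ≤ (Real.sqrt (f u) - 1)^2 := by nlinarith
    exact this
  have hTbound : ε₁^2 * (volume T).toReal ≤ δ^2 := by
    have h1 := setIntegral_ge_of_const_le hTmeas hTfin hgT (hgint.mono_set hTsub)
    have h2 : ∫ u in T, g u ≤ ∫ u in Set.Icc (0:ℝ) 1, g u :=
      setIntegral_mono_set hgint (Filter.Eventually.of_forall fun u => hg0 u)
        (HasSubset.Subset.eventuallyLE hTsub)
    rw [measureReal_def, smul_eq_mul] at h1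
    linarith
  have hTsmall : (volume T).toReal ≤ 1/8 := by
    have he : ε₁^2 = 8 * δ^2 := by rw [hε₁]; nlinarith
    rw [he] at hTbound
    nlinarith [(ENNReal.toReal_nonneg : (0:ℝ) ≤ (volume T).toReal),
      mul_pos hδ0 hδ0, sq_nonneg δ, hδ0]
  have hyex : ∃ y, y ∈ Set.Icc (0:ℝ) 1 ∧ y ∉ T ∧
      y ∉ Set.Ioo (x₀ - 3/8) (x₀ + 3/8) := by
    by_contra hcon
    push_neg at hcon
    have hsub : Set.Icc (0:ℝ) 1 ⊆ T ∪ Set.Ioo (x₀ - 3/8) (x₀ + 3/8) := by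
      intro u hu
      by_cases h1 : u ∈ T
      · exact Or.inl h1
      · exact Or.inr (hcon u hu h1)
    have h1 : volume (Set.Icc (0:ℝ) 1) ≤
        volume T + volume (Set.Ioo (x₀ - 3/8) (x₀ + 3/8)) :=
      le_trans (measure_mono hsub) (measure_union_le _ _)
    have hTv : volume T ≤ ENNReal.ofReal (1/8) := by
      rw [← ENNReal.ofReal_toReal hTfin]
      exact ENNReal.ofReal_le_ofReal hTsmall
    have hIv : volume (Set.Ioo (x₀ - 3/8) (x₀ + 3/8)) = ENNReal.ofReal (3/4) := by
      rw [Real.volume_Ioo]; norm_num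
    rw [Real.volume_Icc, hIv] at h1
    have h2 : ENNReal.ofReal (1 - 0) ≤ ENNReal.ofReal (1/8) + ENNReal.ofReal (3/4) :=
      le_trans h1 (add_le_add_left hTv _)
    rw [← ENNReal.ofReal_add (by norm_num) (by norm_num)] at h2
    have h3 := (ENNReal.ofReal_le_ofReal_iff (by norm_num)).mp h2
    norm_num at h3
  obtain ⟨y, hyI, hyT, hyIoo⟩ := hyex
  have hfy : (1 - ε₁)^2 ≤ f y := by
    by_contra h
    push_neg at h
    exact hyT ⟨hyI, h⟩
  simp only [Set.mem_Ioo, not_and, not_lt] at hyIoo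
  have hne : y ≠ x₀ := by
    intro h; subst h
    have := hyIoo (by linarith)
    linarith
  set K : ℝ := Real.exp (32 * s * δ) with hK
  have hK1 : 1 ≤ K := by
    have := Real.add_one_le_exp (32 * s * δ)
    rw [hK]; nlinarith
  have hK2 : K^2 ≤ f x₀ := by
    have : K^2 = Real.exp (64 * s * δ) := by
      rw [hK, sq, ← Real.exp_add]; ring_nf
    rw [this]; exact hM.le
  set c : ℝ := (1 - ε₁)^2 with hc
  have h1ε : (0:ℝ) < 1 - ε₁ := by linarith
  have hc0 : 0 < c := by rw [hc]; positivity
  have hc1 : c ≤ 1 := by rw [hc]; nlinarith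
  have hKc : (1 + 6*s*δ)^2 ≤ K * c := by
    have h1 : 1 + 16*s*δ ≤ Real.exp (16*s*δ) := by
      have := Real.add_one_le_exp (16*s*δ); linarith
    have h2 : Real.exp (16*s*δ)^2 = K := by
      rw [hK, sq, ← Real.exp_add]; ring_nf
    have he : (1 + 16*s*δ)^2 ≤ K := by
      rw [← h2]
      apply pow_le_pow_left₀ (by positivity) h1
    have hinner : 1 + 6*s*δ ≤ (1 + 16*s*δ) * (1 - ε₁) := by
      rw [hε₁]; nlinarith
    calc (1 + 6*s*δ)^2 ≤ ((1 + 16*s*δ) * (1 - ε₁))^2 := by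
          apply pow_le_pow_left₀ (by positivity) hinner
      _ = (1 + 16*s*δ)^2 * c := by rw [hc]; ring
      _ ≤ K * c := mul_le_mul_of_nonneg_right he hc0.le
  obtain ⟨lo, hi, hlolt, hsubIcc, hlen, hlow⟩ :
      ∃ lo hi : ℝ, lo < hi ∧ Set.Icc lo hi ⊆ Set.Icc (0:ℝ) 1 ∧ 3/16 ≤ hi - lo ∧
        ∀ z ∈ Set.Icc lo hi, K * c ≤ f z := by
    rcases lt_or_gt_of_ne hne with hlt | hgt
    · -- y < x₀
      have hfar : y ≤ x₀ - 3/8 := by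
        by_contra h
        push_neg at h
        have := hyIoo (by linarith)
        linarith
      refine ⟨(x₀ + y)/2, x₀, by linarith, ?_, by linarith, ?_⟩
      · intro z hz
        exact ⟨by linarith [hyI.1, hx₀.1, hz.1], by linarith [hx₀.2, hz.2]⟩
      · exact seg_bound f hf0 hlc hlt hK1 hK2 hc0 hc1 hfy
    · -- x₀ < y
      have hfar : x₀ + 3/8 ≤ y := by
        apply hyIoo; linarith
      have hlcF : ∀ p q t : ℝ, 0 ≤ t → t ≤ 1 →
          (fun z => f (-z)) p ^ t * (fun z => f (-z)) q ^ (1 - t) ≤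
            (fun z => f (-z)) (t * p + (1 - t) * q) := by
        intro p q t ht0 ht1
        have h := hlc (-p) (-q) t ht0 ht1
        have harg : t * (-p) + (1 - t) * (-q) = -(t * p + (1 - t) * q) := by ring
        rw [harg] at h
        simpa using h
      have hseg := seg_bound (fun z => f (-z)) (fun z => hf0 (-z)) hlcF
        (show -y < -x₀ by linarith) hK1 (by simpa using hK2) hc0 hc1
        (by simpa using hfy)
      refine ⟨x₀, (x₀ + y)/2, by linarith, ?_, by linarith, ?_⟩
      · intro z hz
        exact ⟨by linarith [hx₀.1, hz.1], by linarith [hyI.2, hx₀.2, hz.2]⟩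
      · intro z hz
        have h1 : -z ∈ Set.Icc ((-x₀ + -y)/2) (-x₀) :=
          ⟨by linarith [hz.2], by linarith [hz.1]⟩
        have := hseg (-z) h1
        simpa using this
  have hglow : ∀ z ∈ Set.Icc lo hi, 72 * δ^2 ≤ g z := by
    intro z hz
    have h1 := hlow z hz
    have h2 : (1 + 6*s*δ)^2 ≤ f z := le_trans hKc h1
    have h3 : 1 + 6*s*δ ≤ Real.sqrt (f z) := by
      have := Real.sqrt_le_sqrt h2
      rwa [Real.sqrt_sq (by positivity)] at this
    have h4 : (6*s*δ)^2 ≤ (Real.sqrt (f z) - 1)^2 := by nlinarith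
    have h5 : (6*s*δ)^2 = 72 * δ^2 := by nlinarith
    rw [← h5]
    exact h4
  have hfin2 : volume (Set.Icc lo hi) ≠ ⊤ := by
    rw [Real.volume_Icc]; exact ENNReal.ofReal_ne_top
  have hA := setIntegral_ge_of_const_le measurableSet_Icc hfin2 hglow
    (hgint.mono_set hsubIcc)
  have hB2 : ∫ z in Set.Icc lo hi, g z ≤ ∫ u in Set.Icc (0:ℝ) 1, g u :=
    setIntegral_mono_set hgint (Filter.Eventually.of_forall fun u => hg0 u)
      (HasSubset.Subset.eventuallyLE hsubIcc)
  have hvol : (volume (Set.Icc lo hi)).toReal = hi - lo := by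
    rw [Real.volume_Icc, ENNReal.toReal_ofReal (by linarith)]
  rw [measureReal_def, smul_eq_mul, hvol] at hA
  nlinarith [mul_le_mul_of_nonneg_left hlen (by positivity : (0:ℝ) ≤ 72 * δ^2)]
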